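/- Let v : Finset (Fin m) → ℝ with v(∅) = 0, let p be an item pricing, let S ⊆ Fin m be nonempty, and let 0 < ℓ ≤ h be reals. Define U(γ) = max_{T ⊆ S} ( v(T) − γ·p(T) ). If U(h) > 0, then U(ℓ) − U(h) ≥ (h − ℓ) · min_{j ∈ S} p_j. -/
import Mathlib


open Finset

/-- The total price of a bundle of items under an item pricing `p`. -/
def priceOf {m : ℕ} (p : Fin m → ℝ) (T : Finset (Fin m)) : ℝ := ∑ j ∈ T, p j

/-- `U(γ) = max_{T ⊆ S} (v(T) - γ·p(T))`: the buyer's optimal utility over subsets of `S`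
at the uniformly scaled pricing `γ·p`. -/
noncomputable def maxUtil {m : ℕ} (v : Finset (Fin m) → ℝ) (p : Fin m → ℝ)
    (S : Finset (Fin m)) (γ : ℝ) : ℝ :=
  S.powerset.sup' ⟨∅, Finset.empty_mem_powerset S⟩ (fun T => v T - γ * priceOf p T)

/-- If the buyer's optimal utility is still positive at the scaling `h`,
then as the scaling decreases from `h` to `ℓ` the optimal utility increases by at least
`(h - ℓ) · min_{j ∈ S} p_j`. -/
theorem utility_drop
    (m : ℕ) (hm : 1 ≤ m)
    (v : Finset (Fin m) → ℝ) (hv : v ∅ = 0)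
    (p : Fin m → ℝ) (hp : ∀ j, 0 ≤ p j)
    (S : Finset (Fin m)) (hS : S.Nonempty)
    (l h : ℝ) (hl : 0 < l) (hlh : l ≤ h)
    (hU : 0 < maxUtil v p S h) :
    (h - l) * S.inf' hS p ≤ maxUtil v p S l - maxUtil v p S h := by
  obtain ⟨T, hTmem, hTeq⟩ := Finset.exists_mem_eq_sup' (⟨∅, Finset.empty_mem_powerset S⟩ :
    S.powerset.Nonempty) (fun T => v T - h * priceOf p T)
  have hTS : T ⊆ S := Finset.mem_powerset.mp hTmem
  have hTne : T.Nonempty := by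
    rcases T.eq_empty_or_nonempty with rfl | hne
    · rw [maxUtil, hTeq] at hU
      simp [priceOf, hv] at hU
    · exact hne
  obtain ⟨j, hj⟩ := hTne
  have hpT : S.inf' hS p ≤ priceOf p T := by
    calc S.inf' hS p ≤ p j := Finset.inf'_le p (hTS hj)
    _ ≤ priceOf p T := Finset.single_le_sum (fun i _ => hp i) hj
  have hUl : v T - l * priceOf p T ≤ maxUtil v p S l :=
    Finset.le_sup' (fun T => v T - l * priceOf p T) hTmem
  have hUh : maxUtil v p S h = v T - h * priceOf p T := hTeq
  have hhl : 0 ≤ h - l := by linarith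
  nlinarith [mul_le_mul_of_nonneg_left hpT hhl]
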